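/- arXiv:0906.2687 — 4 statements merged into one kernel-verified Lean document; each statement's English description precedes it below -/
import Mathlib

section
/- Let V be a finite set with N := |V| divisible by 4, and let b, c, b', c' : ZMod 4 → ZMod 2. Put β(i) := b(i) + b'(i) and γ(i) := c(i) + c'(i). If β(0) = 0, β(2) = 0, β(1) + β(3) = 0, γ(0) = 0, γ(2) = 0, and γ(1) + γ(3) = 0, then there exists a bijection t̂ : A_b → A_{b'} such that t̂ maps the fiber {(U, φ) : φ ∈ L_b(U)} onto the fiber {(U, ψ) : ψ ∈ L_{b'}(U)} for every U ⊆ V, and for all l, l₁ ∈ A_b, (l, l₁) ∈ T_c if and only if (t̂(l), t̂(l₁)) ∈ T_{c'}; in particular t̂ induces an isomorphism of the corresponding orthoalgebras. -/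
open scoped symmDiff

/-- `T_S(U) := U` if `|U ∩ S|` is even, and `T_S(U) := V ∖ (U Δ S)` if `|U ∩ S|` is odd. -/
def TSmap {V : Type*} [Fintype V] [DecidableEq V] (S U : Finset V) : Finset V :=
  if Even (U ∩ S).card then U else (U ∆ S)ᶜ

/-- `L_b(U) := {φ : V → ZMod 2 | ∑_{z ∈ U} φ z = b(|U| mod 4)}`. -/
def Lb {V : Type*} [DecidableEq V] (b : ZMod 4 → ZMod 2) (U : Finset V) :
    Set (V → ZMod 2) :=
  {φ | ∑ z ∈ U, φ z = b (U.card : ZMod 4)}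

/-- `A_b`: the disjoint union over `U ⊆ V` of the sets `L_b(U)`,
realized as the set of pairs `(U, φ)` with `φ ∈ L_b(U)`. -/
def AbGround (V : Type*) [DecidableEq V] (b : ZMod 4 → ZMod 2) : Type _ :=
  {p : Finset V × (V → ZMod 2) // p.2 ∈ Lb b p.1}

/-- The relation `T_c` on pairs `(U, φ)`: for equal first components it is `φ ≠ φ'`,
and for `U ≠ U₁` it is `∑_{z ∈ U Δ U₁} (φ z + φ₁ z) ≠ c(|U Δ U₁| mod 4)`. -/
def TcP {V : Type*} [DecidableEq V] (c : ZMod 4 → ZMod 2)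
    (p q : Finset V × (V → ZMod 2)) : Prop :=
  if p.1 = q.1 then p.2 ≠ q.2
  else ∑ z ∈ p.1 ∆ q.1, (p.2 z + q.2 z) ≠ c (((p.1 ∆ q.1).card : ZMod 4))

/-- The relation `T_c` on `A_b`. -/
def Tc {V : Type*} [DecidableEq V] (b : ZMod 4 → ZMod 2) (c : ZMod 4 → ZMod 2)
    (l l₁ : AbGround V b) : Prop :=
  TcP c l.1 l₁.1

private lemma A0' : ∀ x y u : ZMod 2, x + y = 0 → x + 0 * u = y := by decide
private lemma A1' : ∀ x y : ZMod 2, x + 1 * (x + y) = y := by decide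
private lemma A3' : ∀ x y z w : ZMod 2, (x + y) + (z + w) = 0 → z + 1 * (x + y) = w := by decide

private lemma zmod2_even {n : ℕ} (h : Even n) : (n : ZMod 2) = 0 := by
  obtain ⟨k, rfl⟩ := h; push_cast; ring_nf
  simp [show (2 : ZMod 2) = 0 from rfl]

private lemma zmod2_odd {n : ℕ} (h : Odd n) : (n : ZMod 2) = 1 := by
  obtain ⟨k, rfl⟩ := h; push_cast
  simp [show (2 : ZMod 2) = 0 from rfl]

private lemma keyB (b b' : ZMod 4 → ZMod 2) (h0 : b 0 + b' 0 = 0) (h2 : b 2 + b' 2 = 0)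
    (h13 : (b 1 + b' 1) + (b 3 + b' 3) = 0) (n : ℕ) :
    b (n : ZMod 4) + (n : ZMod 2) * (b 1 + b' 1) = b' (n : ZMod 4) := by
  have e4 : ((n % 4 : ℕ) : ZMod 4) = (n : ZMod 4) := ZMod.natCast_mod n 4
  have e2 : ((n % 2 : ℕ) : ZMod 2) = (n : ZMod 2) := ZMod.natCast_mod n 2
  have h4 : n % 4 = 0 ∨ n % 4 = 1 ∨ n % 4 = 2 ∨ n % 4 = 3 := by omega
  rcases h4 with h | h | h | h
  · have hv4 : (n : ZMod 4) = 0 := by rw [← e4, h]; decide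
    have hv2 : (n : ZMod 2) = 0 := by rw [← e2, show n % 2 = 0 by omega]; decide
    rw [hv4, hv2]; exact A0' _ _ _ h0
  · have hv4 : (n : ZMod 4) = 1 := by rw [← e4, h]; decide
    have hv2 : (n : ZMod 2) = 1 := by rw [← e2, show n % 2 = 1 by omega]; decide
    rw [hv4, hv2]; exact A1' _ _
  · have hv4 : (n : ZMod 4) = 2 := by rw [← e4, h]; decide
    have hv2 : (n : ZMod 2) = 0 := by rw [← e2, show n % 2 = 0 by omega]; decide
    rw [hv4, hv2]; exact A0' _ _ _ h2
  · have hv4 : (n : ZMod 4) = 3 := by rw [← e4, h]; decide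
    have hv2 : (n : ZMod 2) = 1 := by rw [← e2, show n % 2 = 1 by omega]; decide
    rw [hv4, hv2]; exact A3' _ _ _ _ h13

private lemma memLb {V : Type*} [DecidableEq V] (b b' : ZMod 4 → ZMod 2)
    (h0 : b 0 + b' 0 = 0) (h2 : b 2 + b' 2 = 0)
    (h13 : (b 1 + b' 1) + (b 3 + b' 3) = 0) (U : Finset V) (e : ZMod 2)
    (he : Odd U.card → e = b 1 + b' 1) (φ : V → ZMod 2) (hφ : φ ∈ Lb b U) :
    (fun z => φ z + e) ∈ Lb b' U := by
  have key := keyB b b' h0 h2 h13 U.card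
  simp only [Lb, Set.mem_setOf_eq] at hφ ⊢
  rw [Finset.sum_add_distrib, Finset.sum_const, hφ, nsmul_eq_mul]
  rcases Nat.even_or_odd U.card with hp | hp
  · rw [zmod2_even hp] at key ⊢; rw [zero_mul] at key ⊢; exact key
  · rw [zmod2_odd hp] at key ⊢; rw [he hp]; exact key

theorem stmt16 {V : Type*} [Fintype V] [DecidableEq V]
    (h4 : 4 ∣ Fintype.card V) (b c b' c' : ZMod 4 → ZMod 2)
    (hβ0 : b 0 + b' 0 = 0) (hβ2 : b 2 + b' 2 = 0)
    (hβ13 : (b 1 + b' 1) + (b 3 + b' 3) = 0)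
    (hγ0 : c 0 + c' 0 = 0) (hγ2 : c 2 + c' 2 = 0)
    (hγ13 : (c 1 + c' 1) + (c 3 + c' 3) = 0) :
    ∃ t : AbGround V b ≃ AbGround V b',
      (∀ l : AbGround V b, (t l).1.1 = l.1.1) ∧
      (∀ l l₁ : AbGround V b, Tc b c l l₁ ↔ Tc b' c' (t l) (t l₁)) := by
  set β1 := b 1 + b' 1 with hβ1
  set γ1 := c 1 + c' 1 with hγ1
  set f : Finset V → ZMod 2 := fun U => if Even U.card then β1 + γ1 else β1 with hf
  have hfo : ∀ U : Finset V, Odd U.card → f U = β1 := by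
    intro U hU
    simp only [hf, if_neg (Nat.not_even_iff_odd.mpr hU)]
  -- symmetric hypotheses
  have hβ0' : b' 0 + b 0 = 0 := by rw [add_comm]; exact hβ0
  have hβ2' : b' 2 + b 2 = 0 := by rw [add_comm]; exact hβ2
  have hβ13' : (b' 1 + b 1) + (b' 3 + b 3) = 0 := by
    rw [add_comm (b' 1) (b 1), add_comm (b' 3) (b 3)]; exact hβ13
  have hadd : ∀ a e : ZMod 2, a + e + e = a := by decide
  refine ⟨⟨fun l => ⟨(l.1.1, fun z => l.1.2 z + f l.1.1),
      memLb b b' hβ0 hβ2 hβ13 _ _ (fun h => hfo _ h) _ l.2⟩,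
    fun l => ⟨(l.1.1, fun z => l.1.2 z + f l.1.1),
      memLb b' b hβ0' hβ2' hβ13' _ _ (fun h => by
        rw [hfo _ h, hβ1, add_comm]) _ l.2⟩, ?_, ?_⟩, fun l => rfl, ?_⟩
  · intro l
    apply Subtype.ext
    dsimp only
    exact Prod.ext rfl (funext fun z => hadd _ _)
  · intro l
    apply Subtype.ext
    dsimp only
    exact Prod.ext rfl (funext fun z => hadd _ _)
  · intro l l₁
    obtain ⟨⟨U, φ⟩, hl⟩ := l
    obtain ⟨⟨U₁, φ₁⟩, hl₁⟩ := l₁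
    change TcP c (U, φ) (U₁, φ₁) ↔ TcP c' (U, fun z => φ z + f U) (U₁, fun z => φ₁ z + f U₁)
    simp only [Tc, TcP, Equiv.coe_fn_mk]
    by_cases hU : U = U₁
    · subst hU
      simp only [if_pos rfl]
      constructor
      · intro h hc
        apply h
        funext z
        have h2 := congrFun hc z
        exact add_right_cancel h2
      · intro h hc
        subst hc
        exact h rfl
    · simp only [if_neg hU]
      -- compute the new sum
      set W := U ∆ U₁ with hW
      have hcard : W.card + 2 * (U ∩ U₁).card = U.card + U₁.card := by
        have h1 := Finset.card_sdiff_add_card_inter U U₁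
        have h2 := Finset.card_sdiff_add_card_inter U₁ U
        rw [Finset.inter_comm] at h2
        have h3 : W.card = (U \ U₁).card + (U₁ \ U).card := by
          rw [hW, symmDiff_def, Finset.sup_eq_union,
            Finset.card_union_of_disjoint disjoint_sdiff_sdiff]
        omega
      have hff : f U + f U₁ = (W.card : ZMod 2) * γ1 := by
        have haa : ∀ a : ZMod 2, a + a = 0 := by decide
        have hab : ∀ x y : ZMod 2, (x + y) + x = 1 * y := by decide
        have hab' : ∀ x y : ZMod 2, x + (x + y) = 1 * y := by decide
        rcases Nat.even_or_odd U.card with h1 | h1 <;>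
          rcases Nat.even_or_odd U₁.card with h2 | h2
        · have hWe : Even W.card := by
            rw [Nat.even_iff] at h1 h2 ⊢; omega
          rw [zmod2_even hWe, zero_mul, hf]
          simp only [if_pos h1, if_pos h2]; exact haa _
        · have hWo : Odd W.card := by
            rw [Nat.even_iff] at h1; rw [Nat.odd_iff] at h2 ⊢; omega
          rw [zmod2_odd hWo, hf]
          simp only [if_pos h1, if_neg (Nat.not_even_iff_odd.mpr h2)]
          exact hab _ _
        · have hWo : Odd W.card := by
            rw [Nat.odd_iff] at h1 ⊢; rw [Nat.even_iff] at h2; omega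
          rw [zmod2_odd hWo, hf]
          simp only [if_neg (Nat.not_even_iff_odd.mpr h1), if_pos h2]
          exact hab' _ _
        · have hWe : Even W.card := by
            rw [Nat.odd_iff] at h1 h2; rw [Nat.even_iff]; omega
          rw [zmod2_even hWe, zero_mul, hf]
          simp only [if_neg (Nat.not_even_iff_odd.mpr h1),
            if_neg (Nat.not_even_iff_odd.mpr h2)]
          exact haa _
      have hsum : ∑ z ∈ W, ((φ z + f U) + (φ₁ z + f U₁))
          = (∑ z ∈ W, (φ z + φ₁ z)) + (W.card : ZMod 2) * γ1 := by
        have : ∀ z : V, (φ z + f U) + (φ₁ z + f U₁) = (φ z + φ₁ z) + (f U + f U₁) := by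
          intro z; ring
        simp only [this]
        rw [Finset.sum_add_distrib, Finset.sum_const, nsmul_eq_mul, hff]
        congr 1
        have : ∀ x y : ZMod 2, x * (x * y) = x * y := by decide
        exact this _ _
      have keyc := keyB c c' hγ0 hγ2 hγ13 W.card
      rw [hsum]
      constructor
      · intro h hc
        apply h
        have := keyc
        rw [← this] at hc
        exact add_right_cancel hc
      · intro h hc
        apply h
        rw [hc, keyc]
  done
end

section
/- Let V be a finite set and b, c : ZMod 4 → ZMod 2 with b(0) = 1 and b(2) + c(2) = 0. Let Ω ⊆ V be a nonempty subset of even cardinality. Then there do not exist functions σ_v ∈ L_b({v}) for each v ∈ Ω together with a function φ ∈ L_b(Ω) such that the |Ω| + 1 elements ({v}, σ_v), v ∈ Ω, and (Ω, φ) of A_b are pairwise in the relation T_c. -/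
open scoped symmDiff

theorem stmt17 {V : Type*} [Fintype V] [DecidableEq V]
    (b c : ZMod 4 → ZMod 2) (hb0 : b 0 = 1) (hbc2 : b 2 + c 2 = 0)
    (Ω : Finset V) (hne : Ω.Nonempty) (heven : Even Ω.card) :
    ¬ ∃ (σ : V → (V → ZMod 2)) (φ : V → ZMod 2),
      (∀ v ∈ Ω, σ v ∈ Lb b {v}) ∧ φ ∈ Lb b Ω ∧
      (∀ v ∈ Ω, ∀ v₁ ∈ Ω, v ≠ v₁ → TcP c ({v}, σ v) ({v₁}, σ v₁)) ∧
      (∀ v ∈ Ω, TcP c ({v}, σ v) (Ω, φ)) := by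
  rintro ⟨σ, φ, hσ, hφ, hpair, hmix⟩
  classical
  letI : LinearOrder V := LinearOrder.lift' (Fintype.equivFin V) (Fintype.equivFin V).injective
  set n := Ω.card with hn
  -- ZMod 2 arithmetic helpers
  have hne2 : ∀ x y : ZMod 2, x ≠ y → x = y + 1 := by decide
  -- diagonal values
  have hdiag : ∀ v ∈ Ω, σ v v = b 1 := by
    intro v hv
    have h := hσ v hv
    simpa [Lb] using h
  -- pairwise condition
  have hpair' : ∀ v ∈ Ω, ∀ w ∈ Ω, v ≠ w → σ v w + σ w v = c 2 + 1 := by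
    intro v hv w hw hvw
    have h := hpair v hv w hw hvw
    have hne1 : ({v} : Finset V) ≠ {w} := by simpa using hvw
    rw [TcP, if_neg hne1] at h
    have hsd : ({v} : Finset V) ∆ {w} = {v, w} := by
      ext x
      simp only [Finset.mem_symmDiff, Finset.mem_singleton, Finset.mem_insert]
      constructor
      · rintro (⟨h1, _⟩ | ⟨h1, _⟩) <;> simp [h1]
      · rintro (rfl | rfl)
        · exact Or.inl ⟨rfl, hvw⟩
        · exact Or.inr ⟨rfl, fun h => hvw h.symm⟩
    rw [hsd, Finset.sum_pair hvw, Finset.card_pair hvw] at h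
    dsimp only at h
    have h' := hne2 _ _ h
    have key : ∀ a x y c2 : ZMod 2, (a + x) + (y + a) = c2 + 1 → x + y = c2 + 1 := by decide
    have hvv := hdiag v hv
    have hww := hdiag w hw
    rw [hvv, hww] at h'
    have := key (b 1) (σ w v) (σ v w) (c ((2 : ℕ) : ZMod 4)) h'
    have hc : ((2 : ℕ) : ZMod 4) = 2 := by norm_num
    rw [hc] at this
    rw [add_comm]
    exact this
  -- mixed condition
  have hΩ1 : ∀ v, ({v} : Finset V) ≠ Ω := by
    intro v h
    have h1 : n = 1 := by rw [hn, ← h, Finset.card_singleton]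
    rw [h1] at heven
    exact Nat.not_even_one heven
  have hmix' : ∀ v ∈ Ω, ∑ z ∈ Ω.erase v, (σ v z + φ z)
      = c (((n - 1 : ℕ)) : ZMod 4) + 1 := by
    intro v hv
    have h := hmix v hv
    rw [TcP, if_neg (hΩ1 v)] at h
    have hsd : ({v} : Finset V) ∆ Ω = Ω.erase v := by
      ext x
      simp only [Finset.mem_symmDiff, Finset.mem_singleton, Finset.mem_erase]
      constructor
      · rintro (⟨rfl, h1⟩ | ⟨h1, h2⟩)
        · exact absurd hv h1
        · exact ⟨h2, h1⟩
      · rintro ⟨h1, h2⟩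
        exact Or.inr ⟨h2, h1⟩
    rw [hsd, Finset.card_erase_of_mem hv] at h
    exact hne2 _ _ h
  -- sum the mixed conditions over Ω
  have hEsum : ∑ v ∈ Ω, ∑ z ∈ Ω.erase v, (σ v z + φ z) = 0 := by
    rw [Finset.sum_congr rfl hmix', Finset.sum_const, nsmul_eq_mul]
    have : ((n : ℕ) : ZMod 2) = 0 := by
      rw [← ZMod.natCast_mod, Nat.even_iff.mp heven]
      simp
    rw [this, zero_mul]
  have hEb : ∑ v ∈ Ω, φ v = b ((n : ℕ) : ZMod 4) := hφ
  have hT : ∀ v ∈ Ω, ∑ z ∈ Ω.erase v, φ z = b ((n : ℕ) : ZMod 4) + φ v := by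
    intro v hv
    have h := Finset.add_sum_erase Ω φ hv
    rw [hEb] at h
    have key : ∀ x y s : ZMod 2, x + s = y → s = y + x := by decide
    exact key _ _ _ h
  have hS : ∑ v ∈ Ω, ∑ z ∈ Ω.erase v, σ v z = b ((n : ℕ) : ZMod 4) := by
    have split : ∑ v ∈ Ω, ∑ z ∈ Ω.erase v, (σ v z + φ z)
        = (∑ v ∈ Ω, ∑ z ∈ Ω.erase v, σ v z) + ∑ v ∈ Ω, ∑ z ∈ Ω.erase v, φ z := by
      rw [← Finset.sum_add_distrib]
      exact Finset.sum_congr rfl fun v _ => Finset.sum_add_distrib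
    have hT' : ∑ v ∈ Ω, ∑ z ∈ Ω.erase v, φ z = b ((n : ℕ) : ZMod 4) := by
      rw [Finset.sum_congr rfl hT, Finset.sum_add_distrib, Finset.sum_const, nsmul_eq_mul]
      have : ((n : ℕ) : ZMod 2) = 0 := by
        rw [← ZMod.natCast_mod, Nat.even_iff.mp heven]
        simp
      rw [this, zero_mul, zero_add, hEb]
    rw [split, hT'] at hEsum
    have key : ∀ a d : ZMod 2, a + d = 0 → a = d := by decide
    exact key _ _ hEsum
  -- express the sigma double sum over the off-diagonal
  have hod : ∑ v ∈ Ω, ∑ z ∈ Ω.erase v, σ v z = ∑ p ∈ Ω.offDiag, σ p.1 p.2 := by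
    rw [show Ω.offDiag = (Ω ×ˢ Ω).filter (fun p => p.1 ≠ p.2) from by ext p; simp [and_assoc],
      Finset.sum_filter, Finset.sum_product]
    refine Finset.sum_congr rfl fun v _ => ?_
    rw [← Finset.filter_ne Ω v, Finset.sum_filter]
  set P := Ω.offDiag.filter (fun p => p.1 < p.2) with hP
  set P' := Ω.offDiag.filter (fun p => ¬ p.1 < p.2) with hP'
  have hsplit : ∑ p ∈ Ω.offDiag, σ p.1 p.2
      = (∑ p ∈ P, σ p.1 p.2) + ∑ p ∈ P', σ p.1 p.2 :=
    (Finset.sum_filter_add_sum_filter_not _ _ _).symm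
  have hmemP' : ∀ p : V × V, p ∈ P' → p.2 < p.1 := by
    intro p hp
    rw [hP', Finset.mem_filter, Finset.mem_offDiag] at hp
    exact lt_of_le_of_ne (le_of_not_gt hp.2) (fun h => hp.1.2.2 h.symm)
  have hswap : ∑ p ∈ P', σ p.1 p.2 = ∑ p ∈ P, σ p.2 p.1 := by
    refine Finset.sum_nbij' Prod.swap Prod.swap ?_ ?_ ?_ ?_ ?_
    · intro p hp
      have hlt := hmemP' p hp
      rw [hP', Finset.mem_filter, Finset.mem_offDiag] at hp
      rw [hP, Finset.mem_filter, Finset.mem_offDiag]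
      exact ⟨⟨hp.1.2.1, hp.1.1, fun h => hp.1.2.2 h.symm⟩, hlt⟩
    · intro p hp
      rw [hP, Finset.mem_filter, Finset.mem_offDiag] at hp
      rw [hP', Finset.mem_filter, Finset.mem_offDiag]
      exact ⟨⟨hp.1.2.1, hp.1.1, fun h => hp.1.2.2 h.symm⟩, not_lt.mpr (le_of_lt hp.2)⟩
    · intro p _; exact Prod.swap_swap p
    · intro p _; exact Prod.swap_swap p
    · intro p _; rfl
  have hSP : ∑ p ∈ Ω.offDiag, σ p.1 p.2 = P.card • (c 2 + 1) := by
    rw [hsplit, hswap, ← Finset.sum_add_distrib]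
    rw [Finset.sum_congr rfl (fun p hp => ?_), Finset.sum_const]
    rw [hP, Finset.mem_filter, Finset.mem_offDiag] at hp
    exact hpair' p.1 hp.1.1 p.2 hp.1.2.1 hp.1.2.2
  -- cardinality of P
  have hcard2 : P.card + P'.card = n * n - n := by
    rw [hP, hP', Finset.card_filter_add_card_filter_not, Finset.offDiag_card]
  have hPP' : P.card = P'.card := by
    refine Finset.card_nbij' Prod.swap Prod.swap ?_ ?_ ?_ ?_
    · intro p hp
      rw [hP, Finset.mem_coe, Finset.mem_filter, Finset.mem_offDiag] at hp
      rw [hP', Finset.mem_coe, Finset.mem_filter, Finset.mem_offDiag]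
      exact ⟨⟨hp.1.2.1, hp.1.1, fun h => hp.1.2.2 h.symm⟩, not_lt.mpr (le_of_lt hp.2)⟩
    · intro p hp
      have hlt := hmemP' p hp
      rw [hP', Finset.mem_coe, Finset.mem_filter, Finset.mem_offDiag] at hp
      rw [hP, Finset.mem_coe, Finset.mem_filter, Finset.mem_offDiag]
      exact ⟨⟨hp.1.2.1, hp.1.1, fun h => hp.1.2.2 h.symm⟩, hlt⟩
    · intro p _; exact Prod.swap_swap p
    · intro p _; exact Prod.swap_swap p
  -- the key equation
  have hkey : (P.card) • (c 2 + 1) = b ((n : ℕ) : ZMod 4) := by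
    rw [← hSP, ← hod, hS]
  -- parity analysis
  obtain ⟨m, hm⟩ := heven
  have hm1 : 1 ≤ m := by
    have hpos : 0 < n := by rw [hn]; exact Finset.card_pos.mpr hne
    omega
  have hnm : n = 2 * m := by omega
  have hsq : n * n = 4 * (m * m) := by rw [hnm]; ring
  have hmm : m ≤ m * m := Nat.le_mul_of_pos_left m hm1
  rw [← hPP'] at hcard2
  have hq : P.card % 2 = m % 2 := by omega
  have hcases : n % 4 = 0 ∨ n % 4 = 2 := by omega
  rw [nsmul_eq_mul] at hkey
  rcases hcases with h0 | h2
  · -- n ≡ 0 mod 4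
    have hm2 : m % 2 = 0 := by omega
    have hq0 : ((P.card : ℕ) : ZMod 2) = 0 := by
      rw [← ZMod.natCast_mod, hq, hm2]; simp
    have hn0 : ((n : ℕ) : ZMod 4) = 0 := by
      rw [← ZMod.natCast_mod, h0]; simp
    rw [hq0, hn0, zero_mul] at hkey
    rw [hb0] at hkey
    exact absurd hkey (by decide)
  · -- n ≡ 2 mod 4
    have hm2 : m % 2 = 1 := by omega
    have hq1 : ((P.card : ℕ) : ZMod 2) = 1 := by
      rw [← ZMod.natCast_mod, hq, hm2]; simp
    have hn2' : ((n : ℕ) : ZMod 4) = 2 := by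
      rw [← ZMod.natCast_mod, h2]; norm_num
    rw [hq1, hn2', one_mul] at hkey
    have key : ∀ x y : ZMod 2, x + 1 = y → y + x = 0 → False := by decide
    exact key _ _ hkey hbc2
end

section
/- Let A be a finite nonempty set and T a symmetric, irreflexive relation on A. Let H be a finite-dimensional complex inner product space, and suppose there exists an injective map μ from A to the set of one-dimensional subspaces of H such that for all x ≠ x₁ in A, (x, x₁) ∈ T if and only if μ(x) is orthogonal to μ(x₁). Suppose moreover that for every M maximal (with respect to inclusion) in 𝒫_T(A), the subspaces μ(y), y ∈ M, together span H. Then T is saturated: for every such maximal M and every B ⊆ M one has B^T = ((M ∖ B)^T)^T. -/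
/-- For `B ⊆ A`, `B^T := {l ∈ A | ∀ l₁ ∈ B, (l₁, l) ∈ T}`. -/
def polar {α : Type*} (T : α → α → Prop) (B : Set α) : Set α :=
  {l | ∀ l₁ ∈ B, T l₁ l}

/-- `𝒫_T(A)`: subsets whose distinct elements are pairwise related by `T`. -/
def PTset {α : Type*} (T : α → α → Prop) : Set (Set α) :=
  {U | ∀ l ∈ U, ∀ l₁ ∈ U, l₁ ≠ l → T l l₁}

/-- `𝒫^T(A)`: the image of `𝒫_T(A)` under `B ↦ B^T`. -/
def PTup {α : Type*} (T : α → α → Prop) : Set (Set α) :=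
  polar T '' PTset T

/-- `T` is symmetric: for all `l ≠ l₁`, `(l, l₁) ∈ T ↔ (l₁, l) ∈ T`. -/
def SymmRel {α : Type*} (T : α → α → Prop) : Prop :=
  ∀ l l₁, l ≠ l₁ → (T l l₁ ↔ T l₁ l)

/-- `T` is irreflexive. -/
def IrreflRel {α : Type*} (T : α → α → Prop) : Prop :=
  ∀ l, ¬ T l l

/-- `M` is a maximal element of `𝒫_T(A)` with respect to inclusion. -/
def MaxPT {α : Type*} (T : α → α → Prop) (M : Set α) : Prop :=
  M ∈ PTset T ∧ ∀ M' ∈ PTset T, M ⊆ M' → M' = M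

/-- `T` is saturated: for every maximal `M ∈ 𝒫_T(A)` and every `B ⊆ M`,
`B^T = ((M \ B)^T)^T`. -/
def SaturatedRel {α : Type*} (T : α → α → Prop) : Prop :=
  ∀ M, MaxPT T M → ∀ B ⊆ M, polar T B = polar T (polar T (M \ B))

lemma osymm {H : Type*} [NormedAddCommGroup H] [InnerProductSpace ℂ H]
    (p q : Submodule ℂ H) : p ≤ qᗮ ↔ q ≤ pᗮ := by
  constructor <;> intro h x hx <;> rw [Submodule.mem_orthogonal] <;> intro u hu
  · exact inner_eq_zero_symm.mp ((Submodule.mem_orthogonal _ _).mp (h hu) x hx)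
  · exact inner_eq_zero_symm.mp ((Submodule.mem_orthogonal _ _).mp (h hu) x hx)
theorem stmt18X {α : Type*} [Fintype α] [Nonempty α] (T : α → α → Prop)
    (hsymm : SymmRel T) (hirr : IrreflRel T)
    {H : Type*} [NormedAddCommGroup H] [InnerProductSpace ℂ H]
    [FiniteDimensional ℂ H]
    (μ : α → Submodule ℂ H) (hinj : Function.Injective μ)
    (hdim : ∀ x, Module.finrank ℂ (μ x) = 1)
    (horth : ∀ x x₁, x ≠ x₁ → (T x x₁ ↔ μ x ≤ (μ x₁)ᗮ))
    (hspan : ∀ M : Set α, MaxPT T M → (⨆ y ∈ M, μ y) = ⊤) :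
    SaturatedRel T := by
  intro M hM B hB
  set V : Set α → Submodule ℂ H := fun S => ⨆ y ∈ S, μ y with hV
  have hne : ∀ z : α, ¬ μ z ≤ (μ z)ᗮ := by
    intro z h
    have hb : μ z = ⊥ := by
      have : μ z ≤ μ z ⊓ (μ z)ᗮ := le_inf le_rfl h
      rw [Submodule.inf_orthogonal_eq_bot] at this
      exact le_bot_iff.mp this
    have := hdim z
    rw [hb] at this
    simp at this
  have key : ∀ (S : Set α) (z : α), z ∈ polar T S ↔ μ z ≤ (V S)ᗮ := by
    intro S z
    constructor
    · intro hz
      rw [osymm]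
      refine iSup₂_le fun y hy => ?_
      have hyz : y ≠ z := by rintro rfl; exact hirr y (hz y hy)
      exact (horth y z hyz).mp (hz y hy)
    · intro h y hy
      have hyV : μ y ≤ V S := le_iSup₂ (f := fun y _ => μ y) y hy
      have hyz : y ≠ z := by
        rintro rfl
        exact hne y (h.trans (Submodule.orthogonal_le hyV))
      exact (horth y z hyz).mpr (hyV.trans ((osymm _ _).mp h))
  have hperp : V B ≤ (V (M \ B))ᗮ := by
    refine iSup₂_le fun b hb => ?_
    rw [osymm]
    refine iSup₂_le fun y hy => ?_
    have hby : b ≠ y := fun e => hy.2 (e ▸ hb)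
    exact (osymm _ _).mp ((horth b y hby).mp (hM.1 b (hB hb) y hy.1 (Ne.symm hby)))
  have hsup : V B ⊔ V (M \ B) = ⊤ := by
    rw [hV]
    rw [← iSup_union, Set.union_diff_cancel hB]
    exact hspan M hM
  have hcompl : (V (M \ B))ᗮ = V B := by
    refine le_antisymm ?_ hperp
    have := sup_inf_assoc_of_le (V (M \ B)) hperp
    rw [Submodule.inf_orthogonal_eq_bot, sup_bot_eq, hsup, top_inf_eq] at this
    exact this.le
  have hVp : V (polar T (M \ B)) = V B := by
    refine le_antisymm (iSup₂_le fun z hz => ?_) (iSup₂_le fun b hb => ?_)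
    · rw [key] at hz; exact hcompl ▸ hz
    · refine le_iSup₂ (f := fun y (_ : y ∈ polar T (M \ B)) => μ y) b ?_
      rw [key, hcompl]
      exact le_iSup₂ (f := fun y _ => μ y) b hb
  ext z
  rw [key B z, key (polar T (M \ B)) z, hVp]

theorem stmt18 {α : Type*} [Fintype α] [Nonempty α] (T : α → α → Prop)
    (hsymm : SymmRel T) (hirr : IrreflRel T)
    {H : Type*} [NormedAddCommGroup H] [InnerProductSpace ℂ H]
    [FiniteDimensional ℂ H]
    (μ : α → Submodule ℂ H) (hinj : Function.Injective μ)
    (hdim : ∀ x, Module.finrank ℂ (μ x) = 1)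
    (horth : ∀ x x₁, x ≠ x₁ → (T x x₁ ↔ μ x ≤ (μ x₁)ᗮ))
    (hspan : ∀ M : Set α, MaxPT T M → (⨆ y ∈ M, μ y) = ⊤) :
    SaturatedRel T :=
  stmt18X T hsymm hirr μ hinj hdim horth hspan
end

section
/- Let V be a finite set with |V| = 4, and let b, c : ZMod 4 → ZMod 2 be given by b(0) = c(0) = 1 and b(i) = c(i) = 0 for i = 1, 2, 3. Then there exists an injective map μ from A_b to the set of one-dimensional subspaces of the 8-dimensional complex inner product space ℂ⁸ (EuclideanSpace ℂ (Fin 8)) such that for all x ≠ x₁ in A_b, (x, x₁) ∈ T_c if and only if μ(x) is orthogonal to μ(x₁). -/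
open scoped symmDiff

set_option maxRecDepth 100000
set_option maxHeartbeats 1600000

def T : ℕ := 9643291948982446052831768065677368650285692696371419350494342225124161196426446326502188972601717137569145518214051569113915950216801680712924062843763024598045719899022991272712801042101874555915177688860390516732171756658857822772621559740264717538066203294706852441497862377224809320130959110985684978807520119992382249840606129924493282389023400528310734070094193088769111611926329059599827283994369378200309757523364983162120948095222550477226247547964877750938808453045893999191420105150621020703747056820238924734850484727160841769957086510202966708569068392866380319480669930728860972348244432525334997714222141593598607221047401652354509686408456383930818942184600812760450672330814943624250072557277396083498649801366306472729390012801665596969151490391466200779676508700940385447395097464678839855937028577706451346092937195274510132728034532552518909854559288949325209384738662789152279915641638374622007277581973153395375121270369338390401418921072683616312145360706661218299732006135617897466459925092912432008865929860389310026547283399693234182459109135328707480571809270550949825623438665246001600503007672976366514949307283339193123764569070027850545256839885045247324746267795987651831403295179561825120228096615563263183407303551782368682551395921453144744203218332804693294286133521981374677782781235147437012388915218939221918482465420951634450419344864776464610741596315798699762090665917396586584412094837955247091083352656585015559387290443656556857691531926533728530088708354348232006702283931919383658158647669615438718650003698379416326638315174162366427145522716705573529686221205294512665104610572214524237516581120898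499581775069344979434104232317765237755319237971361119643677830334348549012469464309051853161246564592719934794300917858538775190257955592529946906532964868109101744192597063157247394451265605077640338

def codes : List ℕ := [1, 2, 3, 4, 5, 6, 7, 8, 9, 10, 11, 12, 13, 14, 18, 20, 22, 24, 26, 28, 30, 31, 33, 36, 37, 40, 41, 44, 45, 47, 51, 52, 55, 56, 59, 60, 65, 66, 67, 72, 73, 74, 75, 79, 82, 85, 87, 88, 90, 93, 97, 102, 103, 104, 105, 110, 115, 117, 118, 120, 123, 125, 126, 127, 129, 130, 131, 132, 133, 134, 135, 143, 146, 148, 150, 153, 155, 157, 161, 164, 165, 170, 171, 174, 179, 180, 183, 185, 186, 189, 190, 191, 193, 194, 195, 204, 205, 206, 210, 213, 215, 217, 219, 220, 222, 223, 225, 230, 231, 234, 235, 236, 237, 239, 243, 245, 246, 249, 250, 252]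

def rowN (m : ℕ) : ℕ := (T >>> (24 * m)) % 16777216
def dg (r i : ℕ) : ℕ := (r >>> (3 * i)) % 8
def pgo (r s : ℕ) : ℕ :=
  dg r 0 * dg s 0 + dg r 1 * dg s 1 + dg r 2 * dg s 2 + dg r 3 * dg s 3 +
  dg r 4 * dg s 4 + dg r 5 * dg s 5 + dg r 6 * dg s 6 + dg r 7 * dg s 7
def qgo (r : ℕ) : ℕ :=
  dg r 0 + dg r 1 + dg r 2 + dg r 3 + dg r 4 + dg r 5 + dg r 6 + dg r 7
def Pn (m n : ℕ) : ℕ := pgo (rowN m) (rowN n)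
def Qn (m : ℕ) : ℕ := qgo (rowN m)
def pc4 (x : ℕ) : ℕ := x % 2 + x / 2 % 2 + x / 4 % 2 + x / 8 % 2
def sB (w a : ℕ) : ℕ := pc4 (w &&& a) % 2
def cBn (w : ℕ) : ℕ := if pc4 w % 4 == 0 then 1 else 0
def validB (m : ℕ) : Bool := sB (m % 16) (m / 16) == cBn (m % 16)
def tcB (m n : ℕ) : Bool :=
  if m % 16 = n % 16 then m != n
  else ((sB (m % 16 ^^^ n % 16) (m / 16) + sB (m % 16 ^^^ n % 16) (n / 16)) % 2)
        != cBn (m % 16 ^^^ n % 16)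
def leaf (t : Bool) (d e : ℕ) : Bool := (t == (d == e)) && (d != e + 8) && (e != d + 8)
def pairOK (t : Bool) (r s : ℕ) : Bool := leaf t (pgo r s + 32) (2 * (qgo r + qgo s))
def innerB (m r n : ℕ) : Bool := (m == n) || pairOK (tcB m n) r (rowN n)
def outerB (m : ℕ) : Bool :=
  (pgo (rowN m) (rowN m) + 32 == 2 * (qgo (rowN m) + qgo (rowN m)) + 8) &&
  codes.all (innerB m (rowN m))
def chk : Bool := codes.all outerB

theorem codes_eq : codes = (List.range 256).filter (fun m => validB m) := by decide
theorem chk_true : chk = true := by decide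

theorem mem_codes {m : ℕ} (h1 : m < 256) (h2 : validB m = true) : m ∈ codes := by
  rw [codes_eq]; exact List.mem_filter.mpr ⟨List.mem_range.mpr h1, h2⟩

theorem outer_true {m : ℕ} (hm : m ∈ codes) : outerB m = true := by
  have h := chk_true
  rw [chk, List.all_eq_true] at h
  exact h m hm

theorem norm_m {m : ℕ} (hm : m ∈ codes) : Pn m m + 32 = 2 * (Qn m + Qn m) + 8 := by
  have h := outer_true hm
  rw [outerB, Bool.and_eq_true] at h
  have h1 := h.1
  rw [beq_iff_eq] at h1
  simpa [Pn, Qn] using h1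

theorem pair_facts {m n : ℕ} (hm : m ∈ codes) (hn : n ∈ codes) (hne : m ≠ n) :
    (tcB m n = true ↔ Pn m n + 32 = 2 * (Qn m + Qn n)) ∧
    Pn m n + 32 ≠ 2 * (Qn m + Qn n) + 8 ∧ 2 * (Qn m + Qn n) ≠ Pn m n + 32 + 8 := by
  have h := outer_true hm
  rw [outerB, Bool.and_eq_true, List.all_eq_true] at h
  have h2 := h.2 n hn
  rw [innerB, Bool.or_eq_true] at h2
  rcases h2 with h2 | h2
  · exact absurd (by exact_mod_cast beq_iff_eq.mp h2) hne
  · rw [pairOK, leaf, Bool.and_eq_true, Bool.and_eq_true] at h2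
    obtain ⟨⟨ha, hb⟩, hc⟩ := h2
    rw [beq_iff_eq] at ha
    rw [bne_iff_ne] at hb hc
    refine ⟨?_, by simpa [Pn, Qn] using hb, by simpa [Pn, Qn] using hc⟩
    rw [ha]
    simp [Pn, Qn, beq_iff_eq]

def fvN (m : ℕ) : Fin 8 → ℤ := fun i => (dg (rowN m) i.val : ℤ) - 2
def dotZ (u v : Fin 8 → ℤ) : ℤ := ∑ i, u i * v i

theorem dot_eq (m n : ℕ) : dotZ (fvN m) (fvN n) =
    (Pn m n : ℤ) + 32 - 2 * (Qn m : ℤ) - 2 * (Qn n : ℤ) := by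
  simp only [dotZ, fvN, Pn, Qn, pgo, qgo, Fin.sum_univ_eight,
    show ((0 : Fin 8) : ℕ) = 0 from rfl, show ((1 : Fin 8) : ℕ) = 1 from rfl,
    show ((2 : Fin 8) : ℕ) = 2 from rfl, show ((3 : Fin 8) : ℕ) = 3 from rfl,
    show ((4 : Fin 8) : ℕ) = 4 from rfl, show ((5 : Fin 8) : ℕ) = 5 from rfl,
    show ((6 : Fin 8) : ℕ) = 6 from rfl, show ((7 : Fin 8) : ℕ) = 7 from rfl]
  push_cast
  ring

def b0 : ZMod 4 → ZMod 2 := fun i => if i = 0 then 1 else 0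
def msk (S : Finset (Fin 4)) : ℕ :=
  (if (0 : Fin 4) ∈ S then 1 else 0) + (if (1 : Fin 4) ∈ S then 2 else 0) +
  (if (2 : Fin 4) ∈ S then 4 else 0) + (if (3 : Fin 4) ∈ S then 8 else 0)
def enphi (φ : Fin 4 → ZMod 2) : ℕ :=
  (φ 0).val + 2 * (φ 1).val + 4 * (φ 2).val + 8 * (φ 3).val
def code (p : Finset (Fin 4) × (Fin 4 → ZMod 2)) : ℕ := msk p.1 + 16 * enphi p.2

theorem msk_lt : ∀ S : Finset (Fin 4), msk S < 16 := by decide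
theorem enphi_lt : ∀ φ : Fin 4 → ZMod 2, enphi φ < 16 := by decide
theorem msk_inj : ∀ S S₁ : Finset (Fin 4), msk S = msk S₁ ↔ S = S₁ := by decide
theorem enphi_inj : ∀ φ φ₁ : Fin 4 → ZMod 2, enphi φ = enphi φ₁ ↔ φ = φ₁ := by decide
theorem msk_symmDiff : ∀ S S₁ : Finset (Fin 4), msk (S ∆ S₁) = msk S ^^^ msk S₁ := by decide
theorem sum_msk : ∀ (S : Finset (Fin 4)) (φ : Fin 4 → ZMod 2),
    ∑ z ∈ S, φ z = (sB (msk S) (enphi φ) : ZMod 2) := by decide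
theorem card_msk : ∀ S : Finset (Fin 4),
    b0 ((S.card : ZMod 4)) = (cBn (msk S) : ZMod 2) := by decide

theorem sB_lt (w a : ℕ) : sB w a < 2 := Nat.mod_lt _ (by norm_num)
theorem cBn_lt (w : ℕ) : cBn w < 2 := by unfold cBn; split <;> norm_num

theorem zmod2_inj {x y : ℕ} (hx : x < 2) (hy : y < 2) :
    (x : ZMod 2) = (y : ZMod 2) ↔ x = y := by
  interval_cases x <;> interval_cases y <;> simp <;> decide

theorem code_mod (p : Finset (Fin 4) × (Fin 4 → ZMod 2)) : code p % 16 = msk p.1 := by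
  have h1 := msk_lt p.1
  unfold code
  omega

theorem code_div (p : Finset (Fin 4) × (Fin 4 → ZMod 2)) : code p / 16 = enphi p.2 := by
  have h1 := msk_lt p.1
  unfold code
  omega

theorem code_lt (p : Finset (Fin 4) × (Fin 4 → ZMod 2)) : code p < 256 := by
  have h1 := msk_lt p.1
  have h2 := enphi_lt p.2
  unfold code
  omega

theorem code_inj {p q : Finset (Fin 4) × (Fin 4 → ZMod 2)} :
    code p = code q ↔ p = q := by
  constructor
  · intro h
    have h1 : msk p.1 = msk q.1 := by rw [← code_mod p, ← code_mod q, h]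
    have h2 : enphi p.2 = enphi q.2 := by rw [← code_div p, ← code_div q, h]
    exact Prod.ext ((msk_inj _ _).mp h1) ((enphi_inj _ _).mp h2)
  · rintro rfl; rfl

theorem valid_iff (p : Finset (Fin 4) × (Fin 4 → ZMod 2)) :
    p.2 ∈ Lb b0 p.1 ↔ validB (code p) = true := by
  have h1 : p.2 ∈ Lb b0 p.1 ↔ ∑ z ∈ p.1, p.2 z = b0 ((p.1.card : ZMod 4)) := Iff.rfl
  rw [h1, sum_msk, card_msk, zmod2_inj (sB_lt _ _) (cBn_lt _), validB,
    code_mod, code_div, beq_iff_eq]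

theorem mod2_cast (x y : ℕ) (hy : y < 2) :
    ((x : ZMod 2) ≠ (y : ZMod 2)) ↔ x % 2 ≠ y := by
  have : ((x % 2 : ℕ) : ZMod 2) = (x : ZMod 2) := ZMod.natCast_mod x 2
  rw [← this, zmod2_inj (Nat.mod_lt _ (by norm_num)) hy |>.ne]

theorem tcP_iff (p q : Finset (Fin 4) × (Fin 4 → ZMod 2)) :
    TcP b0 p q ↔ tcB (code p) (code q) = true := by
  unfold TcP tcB
  rw [code_mod p, code_mod q, code_div p, code_div q]
  by_cases h : p.1 = q.1
  · rw [if_pos h, if_pos (by rw [h])]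
    rw [bne_iff_ne]
    constructor
    · intro h2 h3
      exact h2 (by rw [code_inj.mp h3])
    · intro h2 h3
      exact h2 (code_inj.mpr (Prod.ext h h3))
  · rw [if_neg h, if_neg (fun hx => h ((msk_inj _ _).mp hx))]
    have e1 : ∑ z ∈ p.1 ∆ q.1, (p.2 z + q.2 z) =
        (sB (msk p.1 ^^^ msk q.1) (enphi p.2) : ZMod 2) +
        (sB (msk p.1 ^^^ msk q.1) (enphi q.2) : ZMod 2) := by
      rw [Finset.sum_add_distrib, sum_msk, sum_msk, msk_symmDiff]
    have e2 : b0 (((p.1 ∆ q.1).card : ZMod 4)) =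
        (cBn (msk p.1 ^^^ msk q.1) : ZMod 2) := by
      rw [card_msk, msk_symmDiff]
    rw [e1, e2, bne_iff_ne]
    rw [show ((sB (msk p.1 ^^^ msk q.1) (enphi p.2) : ZMod 2) +
        (sB (msk p.1 ^^^ msk q.1) (enphi q.2) : ZMod 2)) =
        (((sB (msk p.1 ^^^ msk q.1) (enphi p.2) +
           sB (msk p.1 ^^^ msk q.1) (enphi q.2) : ℕ)) : ZMod 2) by push_cast; ring]
    exact mod2_cast _ _ (cBn_lt _)

theorem main4 (p q : Finset (Fin 4) × (Fin 4 → ZMod 2))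
    (hp : p.2 ∈ Lb b0 p.1) (hq : q.2 ∈ Lb b0 q.1) (hne : p ≠ q) :
    (TcP b0 p q ↔ dotZ (fvN (code p)) (fvN (code q)) = 0) ∧
    (dotZ (fvN (code p)) (fvN (code q))) ^ 2 ≠ 64 := by
  have hm := mem_codes (code_lt p) ((valid_iff p).mp hp)
  have hn := mem_codes (code_lt q) ((valid_iff q).mp hq)
  have hcne : code p ≠ code q := fun h => hne (code_inj.mp h)
  obtain ⟨h1, h2, h3⟩ := pair_facts hm hn hcne
  constructor
  · rw [tcP_iff, h1, dot_eq]
    constructor <;> intro hx <;> omega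
  · rw [dot_eq]
    intro h64
    have h' : ((Pn (code p) (code q) : ℤ) + 32 - 2 * (Qn (code p) : ℤ) - 2 * (Qn (code q) : ℤ) - 8) *
        ((Pn (code p) (code q) : ℤ) + 32 - 2 * (Qn (code p) : ℤ) - 2 * (Qn (code q) : ℤ) + 8) = 0 := by
      linear_combination h64
    rcases mul_eq_zero.mp h' with hx | hx <;> omega

theorem main4norm (p : Finset (Fin 4) × (Fin 4 → ZMod 2)) (hp : p.2 ∈ Lb b0 p.1) :
    dotZ (fvN (code p)) (fvN (code p)) = 8 := by
  have hm := mem_codes (code_lt p) ((valid_iff p).mp hp)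
  have := norm_m hm
  rw [dot_eq]
  omega

theorem tcP_comm {V : Type*} [DecidableEq V] (c : ZMod 4 → ZMod 2)
    (p q : Finset V × (V → ZMod 2)) : TcP c p q ↔ TcP c q p := by
  unfold TcP
  by_cases h : p.1 = q.1
  · rw [if_pos h, if_pos h.symm]
    exact ne_comm
  · rw [if_neg h, if_neg (Ne.symm h)]
    rw [symmDiff_comm q.1 p.1]
    constructor <;> intro hx <;> intro hy <;> apply hx <;> rw [← hy] <;>
      exact Finset.sum_congr rfl (fun z _ => add_comm _ _)


noncomputable def vC (m : ℕ) : EuclideanSpace ℂ (Fin 8) :=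
  (WithLp.equiv 2 (Fin 8 → ℂ)).symm (fun i => ((fvN m i : ℤ) : ℂ))

theorem vC_inner (m n : ℕ) :
    (inner ℂ (vC m) (vC n) : ℂ) = ((dotZ (fvN m) (fvN n) : ℤ) : ℂ) := by
  rw [PiLp.inner_apply]
  simp only [vC, WithLp.equiv_symm_apply, PiLp.toLp_apply, RCLike.inner_apply, map_intCast]
  rw [dotZ]
  push_cast
  exact Finset.sum_congr rfl fun _ _ => mul_comm _ _

theorem vC_ne (m : ℕ) (h8 : dotZ (fvN m) (fvN m) = 8) : vC m ≠ 0 := by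
  intro h0
  have h := vC_inner m m
  rw [h0, inner_zero_left, h8] at h
  norm_num at h

theorem vC_span_inj {m n : ℕ} (hm8 : dotZ (fvN m) (fvN m) = 8)
    (hn8 : dotZ (fvN n) (fvN n) = 8)
    (hsq : (dotZ (fvN n) (fvN m)) ^ 2 ≠ 64) :
    (ℂ ∙ vC m) ≠ (ℂ ∙ vC n) := by
  intro h
  have hmem : vC m ∈ (ℂ ∙ vC n) := h ▸ Submodule.mem_span_singleton_self (vC m)
  obtain ⟨a, ha⟩ := Submodule.mem_span_singleton.mp hmem
  set d : ℤ := dotZ (fvN n) (fvN m) with hd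
  have h1 : (inner ℂ (vC n) (vC m) : ℂ) = (d : ℂ) := vC_inner n m
  have h2 : (inner ℂ (vC n) (vC m) : ℂ) = a * 8 := by
    rw [← ha, inner_smul_right, vC_inner n n, hn8]
    push_cast
    ring
  have h3 : (inner ℂ (vC m) (vC m) : ℂ) = (starRingEnd ℂ) a * a * 8 := by
    conv_lhs => rw [← ha]
    rw [inner_smul_left, inner_smul_right, vC_inner n n, hn8]
    push_cast
    ring
  have h4 : (8 : ℂ) = (starRingEnd ℂ) a * a * 8 := by
    rw [← h3, vC_inner m m, hm8]
    norm_num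
  have h5 : (starRingEnd ℂ) a * a = 1 := by
    apply mul_right_cancel₀ (b := (8 : ℂ)) (by norm_num)
    rw [one_mul, ← h4]
  have hda : (d : ℂ) = a * 8 := by rw [← h1, h2]
  have hdc : (d : ℂ) = (starRingEnd ℂ) a * 8 := by
    have hcj := congrArg (starRingEnd ℂ) hda
    rwa [map_intCast, map_mul, map_ofNat] at hcj
  have h6 : (d : ℂ) * (d : ℂ) = 64 := by
    nth_rewrite 1 [hda]
    rw [hdc]
    linear_combination (64 : ℂ) * h5
  apply hsq
  rw [pow_two]
  exact_mod_cast h6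

theorem stmt19 {V : Type*} [Fintype V] [DecidableEq V]
    (hcard : Fintype.card V = 4) (b c : ZMod 4 → ZMod 2)
    (hb0 : b 0 = 1) (hc0 : c 0 = 1)
    (hb1 : b 1 = 0) (hb2 : b 2 = 0) (hb3 : b 3 = 0)
    (hc1 : c 1 = 0) (hc2 : c 2 = 0) (hc3 : c 3 = 0) :
    ∃ μ : AbGround V b → Submodule ℂ (EuclideanSpace ℂ (Fin 8)),
      Function.Injective μ ∧
      (∀ x, Module.finrank ℂ (μ x) = 1) ∧
      (∀ x x₁ : AbGround V b, x ≠ x₁ → (Tc b c x x₁ ↔ μ x ≤ (μ x₁)ᗮ)) := by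
  have hbb : b = b0 := by
    funext i
    have h4 : i = 0 ∨ i = 1 ∨ i = 2 ∨ i = 3 := by revert i; decide
    rcases h4 with rfl | rfl | rfl | rfl
    · rw [hb0]; decide
    · rw [hb1]; decide
    · rw [hb2]; decide
    · rw [hb3]; decide
  subst hbb
  have hcc : c = b0 := by
    funext i
    have h4 : i = 0 ∨ i = 1 ∨ i = 2 ∨ i = 3 := by revert i; decide
    rcases h4 with rfl | rfl | rfl | rfl
    · rw [hc0]; decide
    · rw [hc1]; decide
    · rw [hc2]; decide
    · rw [hc3]; decide
  subst hcc
  classical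
  let e : V ≃ Fin 4 := Fintype.equivFinOfCardEq hcard
  let tp : Finset V × (V → ZMod 2) → Finset (Fin 4) × (Fin 4 → ZMod 2) :=
    fun p => (p.1.map e.toEmbedding, fun v => p.2 (e.symm v))
  have hsum : ∀ (U : Finset V) (φ : V → ZMod 2),
      ∑ z ∈ U.map e.toEmbedding, φ (e.symm z) = ∑ z ∈ U, φ z := by
    intro U φ
    rw [Finset.sum_map]
    exact Finset.sum_congr rfl fun x _ => by simp
  have hmem : ∀ p : Finset V × (V → ZMod 2), p.2 ∈ Lb b0 p.1 → (tp p).2 ∈ Lb b0 (tp p).1 := by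
    intro p hp
    show ∑ z ∈ p.1.map e.toEmbedding, p.2 (e.symm z)
        = b0 (((p.1.map e.toEmbedding).card : ZMod 4))
    rw [hsum, Finset.card_map]
    exact hp
  have htpinj : Function.Injective tp := by
    intro p q h
    rw [Prod.ext_iff] at h ⊢
    obtain ⟨h1, h2⟩ := h
    refine ⟨Finset.map_injective e.toEmbedding h1, ?_⟩
    funext v
    have h3 := congrFun h2 (e v)
    simpa [tp] using h3
  have hsd : ∀ U U₁ : Finset V,
      (U.map e.toEmbedding) ∆ (U₁.map e.toEmbedding) = (U ∆ U₁).map e.toEmbedding := by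
    intro U U₁
    rw [Finset.map_eq_image, Finset.map_eq_image, Finset.map_eq_image,
      Finset.image_symmDiff _ _ e.toEmbedding.injective]
  have htc : ∀ p q : Finset V × (V → ZMod 2), TcP b0 p q ↔ TcP b0 (tp p) (tp q) := by
    intro p q
    unfold TcP
    by_cases h : p.1 = q.1
    · rw [if_pos h, if_pos (show (tp p).1 = (tp q).1 by show p.1.map _ = q.1.map _; rw [h])]
      constructor
      · intro h2 h3
        apply h2
        funext v
        have h4 := congrFun h3 (e v)
        simpa [tp] using h4
      · intro h2 h3
        exact h2 (by show (fun v => p.2 (e.symm v)) = fun v => q.2 (e.symm v); rw [h3])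
    · have h' : (tp p).1 ≠ (tp q).1 := fun hx => h (Finset.map_injective _ hx)
      rw [if_neg h, if_neg h']
      have e1 : ∑ z ∈ (tp p).1 ∆ (tp q).1, ((tp p).2 z + (tp q).2 z)
          = ∑ z ∈ p.1 ∆ q.1, (p.2 z + q.2 z) := by
        show ∑ z ∈ (p.1.map e.toEmbedding) ∆ (q.1.map e.toEmbedding),
            (p.2 (e.symm z) + q.2 (e.symm z)) = _
        rw [hsd]
        exact hsum (p.1 ∆ q.1) (fun z => p.2 z + q.2 z)
      have e2 : ((tp p).1 ∆ (tp q).1).card = (p.1 ∆ q.1).card := by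
        show ((p.1.map e.toEmbedding) ∆ (q.1.map e.toEmbedding)).card = _
        rw [hsd, Finset.card_map]
      rw [e1, e2]
  refine ⟨fun x => ℂ ∙ vC (code (tp x.1)), ?_, ?_, ?_⟩
  · intro x x₁ h
    by_contra hne
    have hne1 : tp x.1 ≠ tp x₁.1 := fun hx => hne (Subtype.ext (htpinj hx))
    have hm8 := main4norm (tp x.1) (hmem _ x.2)
    have hn8 := main4norm (tp x₁.1) (hmem _ x₁.2)
    have hsq := (main4 (tp x₁.1) (tp x.1) (hmem _ x₁.2) (hmem _ x.2) (Ne.symm hne1)).2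
    exact vC_span_inj hm8 hn8 hsq h
  · intro x
    exact finrank_span_singleton (vC_ne _ (main4norm (tp x.1) (hmem _ x.2)))
  · intro x x₁ hne
    have hne1 : tp x.1 ≠ tp x₁.1 := fun hx => hne (Subtype.ext (htpinj hx))
    have hiff := (main4 (tp x₁.1) (tp x.1) (hmem _ x₁.2) (hmem _ x.2) (Ne.symm hne1)).1
    show TcP b0 x.1 x₁.1 ↔ _
    rw [tcP_comm b0 x.1 x₁.1, htc x₁.1 x.1, hiff,
      Submodule.span_singleton_le_iff_mem,
      Submodule.mem_orthogonal_singleton_iff_inner_right, vC_inner,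
      Int.cast_eq_zero]
end
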